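/- Let A be a normed division algebra and let a, b, c ∈ Im A. Then the cross product satisfies ‖a × b‖² = ‖a‖²·‖b‖² − ⟨a,b⟩², and the iterated cross product satisfies a × (b × c) = −⟨a,b⟩ • c + ⟨a,c⟩ • b − (1/2) • [a,b,c], where [a,b,c] = (a*b)*c − a*(b*c) is the associator. -/

import Mathlib

open scoped RealInnerProductSpace

/-- A normed division algebra: a real inner product space with an `ℝ`-bilinear
multiplication (not necessarily associative or commutative), a two-sided
multiplicative identity `one ≠ 0`, satisfying `‖a*b‖ = ‖a‖ * ‖b‖`. -/
structure NormedDivisionAlgebra (A : Type*) [NormedAddCommGroup A] [InnerProductSpace ℝ A] where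
  mul : A →ₗ[ℝ] A →ₗ[ℝ] A
  one : A
  one_ne_zero : one ≠ 0
  one_mul : ∀ a : A, mul one a = a
  mul_one : ∀ a : A, mul a one = a
  norm_mul : ∀ a b : A, ‖mul a b‖ = ‖a‖ * ‖b‖

namespace NormedDivisionAlgebra

variable {A : Type*} [NormedAddCommGroup A] [InnerProductSpace ℝ A]

/-- `Re a`: the orthogonal projection of `a` onto the real part `Re A = ℝ · 1`. -/
noncomputable def re (D : NormedDivisionAlgebra A) (a : A) : A :=
  (⟪a, D.one⟫ / ‖D.one‖ ^ 2) • D.one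

/-- `Im a`: the orthogonal projection of `a` onto the imaginary part `Im A = (ℝ · 1)ᗮ`. -/
noncomputable def im (D : NormedDivisionAlgebra A) (a : A) : A := a - D.re a

/-- The conjugate `conj a = Re a - Im a`. -/
noncomputable def conj (D : NormedDivisionAlgebra A) (a : A) : A := D.re a - D.im a

/-- The real part `Re A = ℝ · 1` as a submodule. -/
def ReSub (D : NormedDivisionAlgebra A) : Submodule ℝ A := Submodule.span ℝ {D.one}

/-- The imaginary part `Im A = (ℝ · 1)ᗮ` as a submodule. -/
noncomputable def ImSub (D : NormedDivisionAlgebra A) : Submodule ℝ A := (Submodule.span ℝ {D.one})ᗮ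

/-- The commutator `[a, b] = a*b - b*a`. -/
def comm (D : NormedDivisionAlgebra A) (a b : A) : A := D.mul a b - D.mul b a

/-- The associator `[a, b, c] = (a*b)*c - a*(b*c)`. -/
def assoc (D : NormedDivisionAlgebra A) (a b c : A) : A :=
  D.mul (D.mul a b) c - D.mul a (D.mul b c)

/-- The cross product `a × b = Im (a*b)` (intended for `a, b ∈ Im A`). -/
noncomputable def cross (D : NormedDivisionAlgebra A) (a b : A) : A := D.im (D.mul a b)

end NormedDivisionAlgebra

section Aux
variable {A : Type*} [NormedAddCommGroup A] [InnerProductSpace ℝ A] (D : NormedDivisionAlgebra A)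

lemma nda_norm_one : ‖D.one‖ = 1 := by
  have h := D.norm_mul D.one D.one
  rw [D.one_mul] at h
  have h1 : ‖D.one‖ ≠ 0 := norm_ne_zero_iff.mpr D.one_ne_zero
  have h2 : ‖D.one‖ * (‖D.one‖ - 1) = 0 := by linear_combination -h
  rcases mul_eq_zero.mp h2 with h3 | h3
  · exact absurd h3 h1
  · linarith

lemma nda_polar (x y : A) : ⟪x, y⟫ = (‖x + y‖ ^ 2 - ‖x‖ ^ 2 - ‖y‖ ^ 2) / 2 := by
  rw [norm_add_sq_real]; ring

lemma nda_inner_mul_left (a b c : A) : ⟪D.mul a b, D.mul a c⟫ = ‖a‖ ^ 2 * ⟪b, c⟫ := by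
  rw [nda_polar (D.mul a b) (D.mul a c), nda_polar b c]
  have e : D.mul a b + D.mul a c = D.mul a (b + c) := (map_add _ _ _).symm
  rw [e, D.norm_mul, D.norm_mul, D.norm_mul]
  ring

lemma nda_inner_mul_right (a b c : A) : ⟪D.mul a c, D.mul b c⟫ = ⟪a, b⟫ * ‖c‖ ^ 2 := by
  rw [nda_polar (D.mul a c) (D.mul b c), nda_polar a b]
  have e : D.mul a c + D.mul b c = D.mul (a + b) c := by rw [map_add]; rfl
  rw [e, D.norm_mul, D.norm_mul, D.norm_mul]
  ring

lemma nda_exch1 (a b c d : A) :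
    ⟪D.mul a b, D.mul c d⟫ + ⟪D.mul c b, D.mul a d⟫ = 2 * ⟪a, c⟫ * ⟪b, d⟫ := by
  have h := nda_inner_mul_left D (a + c) b d
  have e1 : D.mul (a + c) b = D.mul a b + D.mul c b := by rw [map_add]; rfl
  have e2 : D.mul (a + c) d = D.mul a d + D.mul c d := by rw [map_add]; rfl
  rw [e1, e2, inner_add_left, inner_add_right, inner_add_right, norm_add_sq_real] at h
  have h1 := nda_inner_mul_left D a b d
  have h2 := nda_inner_mul_left D c b d
  linear_combination h - h1 - h2

lemma nda_exch2 (a b c d : A) :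
    ⟪D.mul a c, D.mul b d⟫ + ⟪D.mul a d, D.mul b c⟫ = 2 * ⟪a, b⟫ * ⟪c, d⟫ := by
  have h := nda_inner_mul_right D a b (c + d)
  have e1 : D.mul a (c + d) = D.mul a c + D.mul a d := map_add _ _ _
  have e2 : D.mul b (c + d) = D.mul b c + D.mul b d := map_add _ _ _
  rw [e1, e2, inner_add_left, inner_add_right, inner_add_right, norm_add_sq_real] at h
  have h1 := nda_inner_mul_right D a b c
  have h2 := nda_inner_mul_right D a b d
  linear_combination h - h1 - h2

lemma nda_skewL {a : A} (ha : ⟪D.one, a⟫ = 0) (x y : A) :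
    ⟪D.mul a x, y⟫ = -⟪x, D.mul a y⟫ := by
  have h := nda_exch1 D a x D.one y
  rw [D.one_mul, D.one_mul] at h
  have : ⟪a, D.one⟫ = 0 := by rw [real_inner_comm]; exact ha
  rw [this] at h
  linarith

lemma nda_skewR {b : A} (hb : ⟪D.one, b⟫ = 0) (x y : A) :
    ⟪D.mul x b, y⟫ = -⟪x, D.mul y b⟫ := by
  have h := nda_exch2 D x y b D.one
  rw [D.mul_one, D.mul_one] at h
  have : ⟪b, D.one⟫ = 0 := by rw [real_inner_comm]; exact hb
  rw [this] at h
  linarith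

lemma nda_sqL {a : A} (ha : ⟪D.one, a⟫ = 0) (x : A) :
    D.mul a (D.mul a x) = -(‖a‖ ^ 2) • x := by
  apply ext_inner_right ℝ
  intro v
  rw [nda_skewL D ha, nda_inner_mul_left, real_inner_smul_left]
  ring

lemma nda_linL {a b : A} (ha : ⟪D.one, a⟫ = 0) (hb : ⟪D.one, b⟫ = 0) (x : A) :
    D.mul a (D.mul b x) + D.mul b (D.mul a x) = (-(2 * ⟪a, b⟫)) • x := by
  have hab : ⟪D.one, a + b⟫ = 0 := by rw [inner_add_right, ha, hb]; ring
  have h := nda_sqL D hab x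
  simp only [map_add, LinearMap.add_apply] at h
  rw [norm_add_sq_real] at h
  have h1 := nda_sqL D ha x
  have h2 := nda_sqL D hb x
  linear_combination (norm := module) h - h1 - h2

lemma nda_sqR {b : A} (hb : ⟪D.one, b⟫ = 0) (x : A) :
    D.mul (D.mul x b) b = -(‖b‖ ^ 2) • x := by
  apply ext_inner_right ℝ
  intro v
  rw [nda_skewR D hb, nda_inner_mul_right, real_inner_smul_left]
  ring

lemma nda_linR {b c : A} (hb : ⟪D.one, b⟫ = 0) (hc : ⟪D.one, c⟫ = 0) (x : A) :
    D.mul (D.mul x b) c + D.mul (D.mul x c) b = (-(2 * ⟪b, c⟫)) • x := by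
  have hbc : ⟪D.one, b + c⟫ = 0 := by rw [inner_add_right, hb, hc]; ring
  have h := nda_sqR D hbc x
  simp only [map_add, LinearMap.add_apply] at h
  rw [norm_add_sq_real] at h
  have h1 := nda_sqR D hb x
  have h2 := nda_sqR D hc x
  linear_combination (norm := module) h - h1 - h2

lemma nda_inner_one {a : A} (ha : ⟪D.one, a⟫ = 0) (b : A) :
    ⟪D.mul a b, D.one⟫ = -⟪a, b⟫ := by
  rw [nda_skewL D ha, D.mul_one, real_inner_comm]

lemma nda_im_inner (x : A) : ⟪D.one, D.im x⟫ = 0 := by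
  have h11 : ⟪D.one, D.one⟫ = 1 := by
    rw [real_inner_self_eq_norm_sq, nda_norm_one]; norm_num
  simp only [NormedDivisionAlgebra.im, NormedDivisionAlgebra.re, inner_sub_right,
    real_inner_smul_right, nda_norm_one, h11]
  rw [real_inner_comm]
  ring

lemma nda_cross_eq {a b : A} (ha : ⟪D.one, a⟫ = 0) (hb : ⟪D.one, b⟫ = 0) :
    D.cross a b = D.mul a b + ⟪a, b⟫ • D.one := by
  have h1 := nda_inner_one D ha b
  simp only [NormedDivisionAlgebra.cross, NormedDivisionAlgebra.im,
    NormedDivisionAlgebra.re, nda_norm_one, h1]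
  match_scalars <;> ring

lemma nda_anticomm {a b : A} (ha : ⟪D.one, a⟫ = 0) (hb : ⟪D.one, b⟫ = 0) :
    D.mul a b + D.mul b a = (-(2 * ⟪a, b⟫)) • D.one := by
  have h := nda_linL D ha hb D.one
  rwa [D.mul_one, D.mul_one] at h

end Aux

theorem nda_cross_norm_and_iterated {A : Type*} [NormedAddCommGroup A] [InnerProductSpace ℝ A]
    (D : NormedDivisionAlgebra A) (a b c : A)
    (ha : a ∈ D.ImSub) (hb : b ∈ D.ImSub) (hc : c ∈ D.ImSub) :
    ‖D.cross a b‖ ^ 2 = ‖a‖ ^ 2 * ‖b‖ ^ 2 - ⟪a, b⟫ ^ 2 ∧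
      D.cross a (D.cross b c) =
        (-⟪a, b⟫) • c + ⟪a, c⟫ • b - (1 / 2 : ℝ) • D.assoc a b c := by
  have ha1 : ⟪D.one, a⟫ = 0 := Submodule.mem_orthogonal_singleton_iff_inner_right.mp ha
  have hb1 : ⟪D.one, b⟫ = 0 := Submodule.mem_orthogonal_singleton_iff_inner_right.mp hb
  have hc1 : ⟪D.one, c⟫ = 0 := Submodule.mem_orthogonal_singleton_iff_inner_right.mp hc
  constructor
  · -- norm identity
    have hcr1 : ⟪D.cross a b, D.one⟫ = 0 := by
      rw [real_inner_comm]; exact nda_im_inner D (D.mul a b)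
    have hd : D.mul a b = D.cross a b + (-⟪a, b⟫) • D.one := by
      rw [nda_cross_eq D ha1 hb1]; module
    have hn : ‖D.mul a b‖ ^ 2 = ‖a‖ ^ 2 * ‖b‖ ^ 2 := by rw [D.norm_mul]; ring
    have hsm : ‖(-⟪a, b⟫) • D.one‖ ^ 2 = ⟪a, b⟫ ^ 2 := by
      rw [norm_smul, Real.norm_eq_abs, nda_norm_one, mul_one, sq_abs]; ring
    have hip : ⟪D.cross a b, (-⟪a, b⟫) • D.one⟫ = 0 := by
      rw [real_inner_smul_right, hcr1]; ring
    have hexp := norm_add_sq_real (D.cross a b) ((-⟪a, b⟫) • D.one)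
    rw [← hd, hip, hsm] at hexp
    linarith
  · -- iterated cross product
    have hw : D.cross b c = D.mul b c + ⟪b, c⟫ • D.one := nda_cross_eq D hb1 hc1
    have hw1 : ⟪D.one, D.cross b c⟫ = 0 := nda_im_inner D (D.mul b c)
    have ha1' : ⟪a, D.one⟫ = 0 := by rw [real_inner_comm]; exact ha1
    have main : D.cross a (D.cross b c) =
        D.mul a (D.mul b c) + ⟪b, c⟫ • a + ⟪a, D.mul b c⟫ • D.one := by
      rw [nda_cross_eq D ha1 hw1, hw, map_add, map_smul, D.mul_one, inner_add_right,
        real_inner_smul_right, ha1']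
      module
    have h1 := nda_linL D ha1 hb1 c
    have h2 := nda_linR D hb1 hc1 a
    have hac1 : ⟪D.mul a c, D.one⟫ = -⟪a, c⟫ := nda_inner_one D ha1 c
    have hximg : ⟪D.one, D.im (D.mul a c)⟫ = 0 := nda_im_inner D _
    have him : D.im (D.mul a c) = D.mul a c + ⟪a, c⟫ • D.one := by
      simp only [NormedDivisionAlgebra.im, NormedDivisionAlgebra.re, nda_norm_one, hac1]
      match_scalars <;> ring
    have h3' := nda_anticomm D hb1 hximg
    have hb1' : ⟪b, D.one⟫ = 0 := by rw [real_inner_comm]; exact hb1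
    have hbim : ⟪b, D.im (D.mul a c)⟫ = ⟪b, D.mul a c⟫ := by
      rw [him, inner_add_right, real_inner_smul_right, hb1']
      ring
    rw [hbim, him] at h3'
    simp only [map_add, map_smul, LinearMap.add_apply, LinearMap.smul_apply,
      D.mul_one, D.one_mul] at h3'
    have h3 : D.mul b (D.mul a c) + D.mul (D.mul a c) b =
        (-(2 * ⟪a, c⟫)) • b + (-(2 * ⟪b, D.mul a c⟫)) • D.one := by
      linear_combination (norm := module) h3'
    have h4 : ⟪b, D.mul a c⟫ = -⟪a, D.mul b c⟫ := by
      have k1 : ⟪D.mul a c, b⟫ = -⟪c, D.mul a b⟫ := nda_skewL D ha1 c b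
      have k2 : ⟪D.mul b c, a⟫ = -⟪c, D.mul b a⟫ := nda_skewL D hb1 c a
      have k3 := nda_anticomm D ha1 hb1
      have hc1' : ⟪c, D.one⟫ = 0 := by rw [real_inner_comm]; exact hc1
      have k4 : ⟪c, D.mul a b⟫ + ⟪c, D.mul b a⟫ = 0 := by
        rw [← inner_add_right, k3, real_inner_smul_right, hc1']
        ring
      have c1 : ⟪b, D.mul a c⟫ = ⟪D.mul a c, b⟫ := real_inner_comm _ _
      have c2 : ⟪a, D.mul b c⟫ = ⟪D.mul b c, a⟫ := real_inner_comm _ _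
      linear_combination c1 + c2 + k1 + k2 - k4
    rw [h4] at h3
    have key : D.mul (D.mul a b) c =
        -(D.mul a (D.mul b c)) + (2 * ⟪a, c⟫) • b + (-(2 * ⟪a, b⟫)) • c +
          (-(2 * ⟪b, c⟫)) • a + (-(2 * ⟪a, D.mul b c⟫)) • D.one := by
      linear_combination (norm := module) h1 + h2 - h3
    rw [main, NormedDivisionAlgebra.assoc, key]
    module
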